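/- Let a, b, T, h₀ be real numbers with a > b ≥ 0 (hence a > 0), T > 0 and h₀ ∈ [0,1]. Let p : [0,T] → [0,1] be monotone nondecreasing, and let m : [0,T] → ℝ be continuous satisfying, for every t ∈ [0,T], m(t) ≤ −h₀ + ∫₀ᵗ (a·m(s) + b + (a−b)·p(s)) ds. Then, by the integral form of Grönwall's inequality, m(T) ≤ −h₀·e^{aT} + (b/a)(e^{aT} − 1) + ((a−b)/a)·p(T)·(e^{aT} − 1). -/

import Mathlib

open MeasureTheory Set intervalIntegral

/-- the Grönwall estimation step in the proof of Theorem 1. If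
`p : [0,T] → [0,1]` is nondecreasing and `m` is continuous and satisfies the integral
inequality `m t ≤ -h₀ + ∫₀ᵗ (a m s + b + (a - b) p s) ds` on `[0, T]`, then
`m T ≤ -h₀ e^{aT} + (b/a)(e^{aT} - 1) + ((a-b)/a) p T (e^{aT} - 1)`. -/
theorem gronwall_step (a b T h₀ : ℝ)
    (hab : b < a) (hb : 0 ≤ b) (hT : 0 < T) (hh₀ : h₀ ∈ Set.Icc (0 : ℝ) 1)
    (p : ℝ → ℝ) (hp01 : ∀ t ∈ Set.Icc (0 : ℝ) T, p t ∈ Set.Icc (0 : ℝ) 1)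
    (hpmono : MonotoneOn p (Set.Icc (0 : ℝ) T))
    (m : ℝ → ℝ) (hm : ContinuousOn m (Set.Icc (0 : ℝ) T))
    (hint : ∀ t ∈ Set.Icc (0 : ℝ) T,
      m t ≤ -h₀ + ∫ s in (0 : ℝ)..t, (a * m s + b + (a - b) * p s)) :
    m T ≤ -h₀ * Real.exp (a * T) + (b / a) * (Real.exp (a * T) - 1) +
      ((a - b) / a) * p T * (Real.exp (a * T) - 1) := by
  have ha : 0 < a := lt_of_le_of_lt hb hab
  have hba : 0 < a - b := sub_pos.2 hab
  set C : ℝ := b + (a - b) * p T with hCdef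
  set g : ℝ → ℝ := fun s => a * m s + C with hgdef
  have hgcont : ContinuousOn g (Icc 0 T) :=
    (continuousOn_const.mul hm).add continuousOn_const
  have hTmem : T ∈ Icc (0 : ℝ) T := ⟨hT.le, le_rfl⟩
  -- interval integrability on [0, t] for t ∈ [0, T]
  have hgint : ∀ t ∈ Icc (0 : ℝ) T, IntervalIntegrable g volume 0 t := by
    intro t ht
    exact (hgcont.mono (Icc_subset_Icc le_rfl ht.2)).intervalIntegrable_of_Icc ht.1
  have horigint : ∀ t ∈ Icc (0 : ℝ) T,
      IntervalIntegrable (fun s => a * m s + b + (a - b) * p s) volume 0 t := by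
    intro t ht
    have h1 : IntervalIntegrable (fun s => a * m s + b) volume 0 t :=
      (((continuousOn_const.mul hm).add continuousOn_const).mono
        (Icc_subset_Icc le_rfl ht.2)).intervalIntegrable_of_Icc ht.1
    have h2 : IntervalIntegrable (fun s => (a - b) * p s) volume 0 t := by
      have hpm : MonotoneOn (fun s => (a - b) * p s) (uIcc (0 : ℝ) t) := by
        rw [uIcc_of_le ht.1]
        intro x hx y hy hxy
        have := hpmono (Icc_subset_Icc le_rfl ht.2 hx) (Icc_subset_Icc le_rfl ht.2 hy) hxy
        dsimp only
        nlinarith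
      exact hpm.intervalIntegrable
    exact h1.add h2
  -- m t ≤ v t on [0, T]
  set v : ℝ → ℝ := fun t => -h₀ + ∫ s in (0 : ℝ)..t, g s with hvdef
  have hmv : ∀ t ∈ Icc (0 : ℝ) T, m t ≤ v t := by
    intro t ht
    refine (hint t ht).trans ?_
    have hmono : (∫ s in (0 : ℝ)..t, (a * m s + b + (a - b) * p s)) ≤
        ∫ s in (0 : ℝ)..t, g s := by
      refine integral_mono_on ht.1 (horigint t ht) (hgint t ht) ?_
      intro s hs
      have hsT : s ∈ Icc (0 : ℝ) T := ⟨hs.1, hs.2.trans ht.2⟩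
      have hps : p s ≤ p T := hpmono hsT hTmem hsT.2
      simp only [hgdef, hCdef]
      nlinarith
    simpa [hvdef] using add_le_add_left hmono (-h₀)
  -- v is continuous on [0, T]
  have hvcont : ContinuousOn v (Icc 0 T) := by
    have : ContinuousOn (fun t => ∫ s in (0 : ℝ)..t, g s) (Icc 0 T) := by
      have := continuousOn_primitive_interval'
        (μ := volume) (f := g) (b₁ := (0 : ℝ)) (b₂ := T) (a := (0 : ℝ))
        (hgint T hTmem) (by rw [uIcc_of_le hT.le]; exact ⟨le_rfl, hT.le⟩)
      rwa [uIcc_of_le hT.le] at this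
    exact continuousOn_const.add this
  -- v has derivative g t at interior points
  have hvderiv : ∀ t ∈ Ioo (0 : ℝ) T, HasDerivAt v (g t) t := by
    intro t ht
    have hmeas : StronglyMeasurableAtFilter g (nhds t) volume :=
      ⟨Ioo 0 T, Ioo_mem_nhds ht.1 ht.2,
        (hgcont.mono Ioo_subset_Icc_self).aestronglyMeasurable measurableSet_Ioo⟩
    have hct : ContinuousAt g t :=
      hgcont.continuousAt (Icc_mem_nhds ht.1 ht.2)
    have := integral_hasDerivAt_right (hgint t ⟨ht.1.le, ht.2.le⟩) hmeas hct
    simpa [hvdef] using this.const_add (-h₀)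
  -- w := (v + C/a) * exp(-a t) is antitone on [0, T]
  set w : ℝ → ℝ := fun t => (v t + C / a) * Real.exp (-a * t) with hwdef
  have hwderiv : ∀ t ∈ Ioo (0 : ℝ) T,
      HasDerivAt w (g t * Real.exp (-a * t) + (v t + C / a) * (-a * Real.exp (-a * t))) t := by
    intro t ht
    have h1 : HasDerivAt (fun t => v t + C / a) (g t) t := (hvderiv t ht).add_const _
    have h2 : HasDerivAt (fun t => Real.exp (-a * t)) (-a * Real.exp (-a * t)) t := by
      have := ((hasDerivAt_id t).const_mul (-a)).exp
      simpa [mul_comm] using this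
    exact h1.mul h2
  have hwanti : AntitoneOn w (Icc 0 T) := by
    apply antitoneOn_of_deriv_nonpos (convex_Icc 0 T)
    · exact ((hvcont.add continuousOn_const).mul
        ((Real.continuous_exp.comp (continuous_const.mul continuous_id)).continuousOn))
    · intro t ht
      rw [interior_Icc] at ht
      exact (hwderiv t ht).differentiableAt.differentiableWithinAt
    · intro t ht
      rw [interior_Icc] at ht
      rw [(hwderiv t ht).deriv]
      have hmt : m t ≤ v t := hmv t ⟨ht.1.le, ht.2.le⟩
      have hexp : 0 < Real.exp (-a * t) := Real.exp_pos _
      have : g t * Real.exp (-a * t) + (v t + C / a) * (-a * Real.exp (-a * t))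
          = a * (m t - v t) * Real.exp (-a * t) := by
        simp only [hgdef]
        field_simp
        ring
      rw [this]
      have : a * (m t - v t) ≤ 0 := by nlinarith
      exact mul_nonpos_of_nonpos_of_nonneg this hexp.le
  have hw0 : w 0 = -h₀ + C / a := by
    simp [hwdef, hvdef]
  have hwT : w T ≤ -h₀ + C / a := by
    rw [← hw0]
    exact hwanti ⟨le_rfl, hT.le⟩ hTmem hT.le
  -- unfold w T
  have hexpT : Real.exp (-a * T) * Real.exp (a * T) = 1 := by
    rw [← Real.exp_add]; simp
  have hvT : v T + C / a ≤ (-h₀ + C / a) * Real.exp (a * T) := by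
    have h := mul_le_mul_of_nonneg_right hwT (Real.exp_pos (a * T)).le
    calc v T + C / a = (v T + C / a) * (Real.exp (-a * T) * Real.exp (a * T)) := by
          rw [hexpT, mul_one]
      _ = w T * Real.exp (a * T) := by rw [hwdef]; ring
      _ ≤ (-h₀ + C / a) * Real.exp (a * T) := h
  have hmT : m T ≤ v T := hmv T hTmem
  have hC : C / a = b / a + (a - b) / a * p T := by
    rw [hCdef]; field_simp
  clear_value w v g C
  have hfinal : m T ≤ (-h₀ + C / a) * Real.exp (a * T) - C / a := by linarith
  have heq : (-h₀ + C / a) * Real.exp (a * T) - C / a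
      = -h₀ * Real.exp (a * T) + (b / a) * (Real.exp (a * T) - 1) +
        ((a - b) / a) * p T * (Real.exp (a * T) - 1) := by
    rw [hCdef]; field_simp; ring
  exact hfinal.trans_eq heq
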